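/- arXiv:2008.04510 — 3 statements merged into one kernel-verified Lean document; each statement's English description precedes it below -/
import Mathlib

section
/- (Lower bound, Two-to-One.) Let X be a countable type (the union of sentences of two source languages), let D₀ and D₁ be probability distributions (PMFs) on X, let Y be a countable type (sentences of the target language), and let f₀*, f₁* : X → Y be the ground-truth translators for the two translation tasks. Let Z be a measurable space and g : X → Z be a map with d_TV(g♯D₀, g♯D₁) ≤ ε. Then for every measurable decoder h : Z → Y, Pr_{X∼D₀}(h(g(X)) ≠ f₀*(X)) + Pr_{X∼D₁}(h(g(X)) ≠ f₁*(X)) ≥ d_TV(f₀*♯D₀, f₁*♯D₁) − ε. -/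
open MeasureTheory

/-- Total variation distance between two measures: supremum over measurable events of
the absolute difference of the probabilities. -/
noncomputable def tvDist {α : Type*} [MeasurableSpace α] (P Q : Measure α) : ℝ :=
  ⨆ E : {s : Set α // MeasurableSet s}, |(P E.1).toReal - (Q E.1).toReal|

lemma tv_bddAbove {α : Type*} [MeasurableSpace α] (P Q : Measure α)
    [IsProbabilityMeasure P] [IsProbabilityMeasure Q] :
    BddAbove (Set.range fun E : {s : Set α // MeasurableSet s} =>
      |(P E.1).toReal - (Q E.1).toReal|) := by
  refine ⟨2, ?_⟩
  rintro x ⟨E, rfl⟩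
  have h1 : (P E.1).toReal ≤ 1 := by
    have := prob_le_one (μ := P) (s := E.1)
    have := ENNReal.toReal_mono (by simp) this
    simpa using this
  have h2 : (Q E.1).toReal ≤ 1 := by
    have := prob_le_one (μ := Q) (s := E.1)
    have := ENNReal.toReal_mono (by simp) this
    simpa using this
  have h3 : (0:ℝ) ≤ (P E.1).toReal := ENNReal.toReal_nonneg
  have h4 : (0:ℝ) ≤ (Q E.1).toReal := ENNReal.toReal_nonneg
  rw [abs_sub_le_iff]
  constructor <;> linarith

lemma abs_diff_le {α : Type*} [MeasurableSpace α] (μ : Measure α) [IsFiniteMeasure μ]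
    (A B S : Set α) (hAB : A \ B ⊆ S) (hBA : B \ A ⊆ S) :
    |(μ A).toReal - (μ B).toReal| ≤ (μ S).toReal := by
  have key : ∀ C D : Set α, C \ D ⊆ S → (μ C).toReal - (μ D).toReal ≤ (μ S).toReal := by
    intro C D hCD
    have h1 : μ C ≤ μ D + μ S := by
      calc μ C ≤ μ (D ∪ (C \ D)) := measure_mono (by intro x hx; by_cases hxD : x ∈ D <;> simp [hxD, hx])
        _ ≤ μ D + μ (C \ D) := measure_union_le _ _
        _ ≤ μ D + μ S := add_le_add le_rfl (measure_mono hCD)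
    have h2 : (μ C).toReal ≤ (μ D + μ S).toReal :=
      ENNReal.toReal_mono (by finiteness) h1
    rw [ENNReal.toReal_add (measure_ne_top _ _) (measure_ne_top _ _)] at h2
    linarith
  rw [abs_sub_le_iff]
  exact ⟨key A B hAB, key B A hBA⟩

/-- Lower bound, Two-to-One: if `g` is an `ε`-universal language mapping for the two
source distributions `D₀, D₁`, then for any measurable decoder `h` the sum of the
translation errors on the two tasks is at least the total variation distance between
the target marginals minus `ε`. -/
theorem two_to_one_lower_bound {X Y Z : Type*}
    [Countable X] [MeasurableSpace X] [DiscreteMeasurableSpace X]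
    [Countable Y] [MeasurableSpace Y] [DiscreteMeasurableSpace Y]
    [MeasurableSpace Z]
    (D₀ D₁ : PMF X) (f₀ f₁ : X → Y) (g : X → Z) (ε : ℝ)
    (hg : tvDist (D₀.map g).toMeasure (D₁.map g).toMeasure ≤ ε)
    {h : Z → Y} (hh : Measurable h) :
    (D₀.toMeasure {x | h (g x) ≠ f₀ x}).toReal
      + (D₁.toMeasure {x | h (g x) ≠ f₁ x}).toReal
      ≥ tvDist (D₀.map f₀).toMeasure (D₁.map f₁).toMeasure - ε := by
  have hgm : Measurable g := .of_discrete
  have hf₀ : Measurable f₀ := .of_discrete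
  have hf₁ : Measurable f₁ := .of_discrete
  set e₀ := (D₀.toMeasure {x | h (g x) ≠ f₀ x}).toReal
  set e₁ := (D₁.toMeasure {x | h (g x) ≠ f₁ x}).toReal
  have key : tvDist (D₀.map f₀).toMeasure (D₁.map f₁).toMeasure ≤ e₀ + e₁ + ε := by
    apply ciSup_le
    rintro ⟨E, hE⟩
    have hmap : ∀ (D : PMF X) (f : X → Y) (hf : Measurable f),
        (D.map f).toMeasure E = D.toMeasure (f ⁻¹' E) := by
      intro D f hf
      rw [← PMF.toMeasure_map f D hf, Measure.map_apply hf hE]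
    rw [hmap D₀ f₀ hf₀, hmap D₁ f₁ hf₁]
    have hG : |(D₀.toMeasure ((h ∘ g) ⁻¹' E)).toReal
        - (D₁.toMeasure ((h ∘ g) ⁻¹' E)).toReal| ≤ ε := by
      have heq : ∀ D : PMF X, (D.map g).toMeasure (h ⁻¹' E)
          = D.toMeasure ((h ∘ g) ⁻¹' E) := by
        intro D
        rw [← PMF.toMeasure_map g D hgm, Measure.map_apply hgm (hh hE)]
        rfl
      have hle : |((D₀.map g).toMeasure (h ⁻¹' E)).toReal
          - ((D₁.map g).toMeasure (h ⁻¹' E)).toReal|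
          ≤ tvDist (D₀.map g).toMeasure (D₁.map g).toMeasure :=
        le_ciSup (tv_bddAbove _ _) ⟨h ⁻¹' E, hh hE⟩
      rw [heq D₀, heq D₁] at hle
      linarith
    have h₀ : |(D₀.toMeasure (f₀ ⁻¹' E)).toReal
        - (D₀.toMeasure ((h ∘ g) ⁻¹' E)).toReal| ≤ e₀ := by
      apply abs_diff_le
      · intro x hx; simp only [Set.mem_diff, Set.mem_preimage, Function.comp] at hx
        simp only [Set.mem_setOf_eq]; intro hc; rw [hc] at hx; exact hx.2 hx.1
      · intro x hx; simp only [Set.mem_diff, Set.mem_preimage, Function.comp] at hx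
        simp only [Set.mem_setOf_eq]; intro hc; rw [hc] at hx; exact hx.2 hx.1
    have h₁ : |(D₁.toMeasure (f₁ ⁻¹' E)).toReal
        - (D₁.toMeasure ((h ∘ g) ⁻¹' E)).toReal| ≤ e₁ := by
      apply abs_diff_le
      · intro x hx; simp only [Set.mem_diff, Set.mem_preimage, Function.comp] at hx
        simp only [Set.mem_setOf_eq]; intro hc; rw [hc] at hx; exact hx.2 hx.1
      · intro x hx; simp only [Set.mem_diff, Set.mem_preimage, Function.comp] at hx
        simp only [Set.mem_setOf_eq]; intro hc; rw [hc] at hx; exact hx.2 hx.1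
    have := abs_sub_abs_le_abs_sub (D₀.toMeasure (f₀ ⁻¹' E)).toReal (D₁.toMeasure (f₁ ⁻¹' E)).toReal
    rw [abs_sub_le_iff] at h₀ h₁ hG ⊢
    constructor <;> linarith [h₀.1, h₀.2, h₁.1, h₁.2, hG.1, hG.2]
  linarith
end

section
/- (Many-to-one, average error.) Let K ≥ 2, let X be a countable type, and for each i ∈ {0,…,K−1} let Dᵢ be a probability distribution (PMF) on X and fᵢ* : X → Y a ground-truth translator into a countable type Y. Let Z be a measurable space and g : X → Z satisfy d_TV(g♯Dᵢ, g♯Dⱼ) ≤ ε for all i ≠ j. Then for every measurable decoder h : Z → Y, (K−1)·Σ_{i} Pr_{X∼Dᵢ}(h(g(X)) ≠ fᵢ*(X)) ≥ Σ_{i<j} d_TV(fᵢ*♯Dᵢ, fⱼ*♯Dⱼ) − (K(K−1)/2)·ε. -/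
open MeasureTheory

section Aux

variable {α : Type*} [MeasurableSpace α]

lemma prob_toReal_le_one (P : Measure α) [IsProbabilityMeasure P] (s : Set α) :
    (P s).toReal ≤ 1 :=
  ENNReal.toReal_le_of_le_ofReal zero_le_one (by simpa using prob_le_one)

lemma tvDist_le (P Q : Measure α) {c : ℝ} (hc : 0 ≤ c)
    (H : ∀ s : Set α, MeasurableSet s → |(P s).toReal - (Q s).toReal| ≤ c) :
    tvDist P Q ≤ c :=
  Real.iSup_le (fun E => H E.1 E.2) hc

lemma abs_le_tvDist (P Q : Measure α) [IsProbabilityMeasure P] [IsProbabilityMeasure Q]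
    {s : Set α} (hs : MeasurableSet s) :
    |(P s).toReal - (Q s).toReal| ≤ tvDist P Q := by
  refine le_ciSup (f := fun E : {s : Set α // MeasurableSet s} =>
    |(P E.1).toReal - (Q E.1).toReal|) ⟨2, ?_⟩ ⟨s, hs⟩
  rintro x ⟨E, rfl⟩
  calc |(P E.1).toReal - (Q E.1).toReal| ≤ |(P E.1).toReal| + |(Q E.1).toReal| :=
        abs_sub _ _
    _ ≤ 1 + 1 := by
        gcongr <;> rw [abs_of_nonneg ENNReal.toReal_nonneg] <;>
          exact prob_toReal_le_one _ _
    _ = 2 := by norm_num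

lemma tvDist_nonneg (P Q : Measure α) [IsProbabilityMeasure P] [IsProbabilityMeasure Q] :
    0 ≤ tvDist P Q := by
  have := abs_le_tvDist P Q MeasurableSet.empty
  exact le_trans (abs_nonneg _) this

lemma abs_measure_diff_le (P : Measure α) [IsFiniteMeasure P] {A B S : Set α}
    (h1 : A \ B ⊆ S) (h2 : B \ A ⊆ S) :
    |(P A).toReal - (P B).toReal| ≤ (P S).toReal := by
  have key : ∀ C D : Set α, C \ D ⊆ S →
      (P C).toReal - (P D).toReal ≤ (P S).toReal := by
    intro C D hCD
    rw [sub_le_iff_le_add]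
    have hsub : C ⊆ D ∪ S := by
      intro x hx
      by_cases hd : x ∈ D
      · exact Or.inl hd
      · exact Or.inr (hCD ⟨hx, hd⟩)
    calc (P C).toReal ≤ (P D + P S).toReal := by
          refine ENNReal.toReal_mono (by finiteness) ?_
          exact le_trans (measure_mono hsub) (measure_union_le _ _)
      _ = (P D).toReal + (P S).toReal := ENNReal.toReal_add (by finiteness) (by finiteness)
      _ = (P S).toReal + (P D).toReal := by ring
  rw [abs_sub_le_iff]
  exact ⟨key A B h1, key B A h2⟩

end Aux

section Pair

variable {X Y Z : Type*} [MeasurableSpace X] [DiscreteMeasurableSpace X]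
  [MeasurableSpace Y] [MeasurableSpace Z]

lemma pair_bound (P Q : PMF X) (fi fj : X → Y) (g : X → Z) (h : Z → Y) (hh : Measurable h) :
    tvDist (P.map fi).toMeasure (Q.map fj).toMeasure ≤
      (P.toMeasure {x | h (g x) ≠ fi x}).toReal +
      (Q.toMeasure {x | h (g x) ≠ fj x}).toReal +
      tvDist (P.map g).toMeasure (Q.map g).toMeasure := by
  apply tvDist_le
  · have := tvDist_nonneg (P.map g).toMeasure (Q.map g).toMeasure
    positivity
  intro E hE
  rw [PMF.toMeasure_map_apply fi P E Measurable.of_discrete hE,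
      PMF.toMeasure_map_apply fj Q E Measurable.of_discrete hE]
  have key1 : |(P.toMeasure (fi ⁻¹' E)).toReal -
      (P.toMeasure ((fun x => h (g x)) ⁻¹' E)).toReal| ≤
      (P.toMeasure {x | h (g x) ≠ fi x}).toReal := by
    apply abs_measure_diff_le
    · rintro x ⟨hx1, hx2⟩ heq
      exact hx2 (by simpa [Set.mem_preimage, heq] using hx1)
    · rintro x ⟨hx1, hx2⟩ heq
      exact hx2 (by simpa [Set.mem_preimage, ← heq] using hx1)
  have key2 : |(Q.toMeasure ((fun x => h (g x)) ⁻¹' E)).toReal -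
      (Q.toMeasure (fj ⁻¹' E)).toReal| ≤
      (Q.toMeasure {x | h (g x) ≠ fj x}).toReal := by
    apply abs_measure_diff_le
    · rintro x ⟨hx1, hx2⟩ heq
      exact hx2 (by simpa [Set.mem_preimage, ← heq] using hx1)
    · rintro x ⟨hx1, hx2⟩ heq
      exact hx2 (by simpa [Set.mem_preimage, heq] using hx1)
  have keymid : |(P.toMeasure ((fun x => h (g x)) ⁻¹' E)).toReal -
      (Q.toMeasure ((fun x => h (g x)) ⁻¹' E)).toReal| ≤
      tvDist (P.map g).toMeasure (Q.map g).toMeasure := by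
    have hpre : (fun x => h (g x)) ⁻¹' E = g ⁻¹' (h ⁻¹' E) := rfl
    rw [hpre, ← PMF.toMeasure_map_apply g P (h ⁻¹' E) Measurable.of_discrete (hh hE),
        ← PMF.toMeasure_map_apply g Q (h ⁻¹' E) Measurable.of_discrete (hh hE)]
    exact abs_le_tvDist _ _ (hh hE)
  set a := (P.toMeasure (fi ⁻¹' E)).toReal with ha
  set b := (P.toMeasure ((fun x => h (g x)) ⁻¹' E)).toReal with hb
  set c := (Q.toMeasure ((fun x => h (g x)) ⁻¹' E)).toReal with hc
  set d := (Q.toMeasure (fj ⁻¹' E)).toReal with hd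
  have t1 := abs_sub_le a b d
  have t2 := abs_sub_le b c d
  have k1 : |a - b| ≤ (P.toMeasure {x | h (g x) ≠ fi x}).toReal := key1
  have k2 : |c - d| ≤ (Q.toMeasure {x | h (g x) ≠ fj x}).toReal := key2
  have km : |b - c| ≤ tvDist (P.map g).toMeasure (Q.map g).toMeasure := keymid
  calc |a - d| ≤ |a - b| + |b - d| := t1
    _ ≤ |a - b| + (|b - c| + |c - d|) := by linarith
    _ ≤ _ := by linarith

end Pair

lemma sum_pairs (K : ℕ) (e : Fin K → ℝ) :
    ∑ p ∈ Finset.univ.filter (fun p : Fin K × Fin K => p.1 < p.2), (e p.1 + e p.2)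
      = ((K : ℝ) - 1) * ∑ i, e i := by
  rw [Finset.sum_filter, Fintype.sum_prod_type]
  have step : ∀ i j : Fin K, (if i < j then e i + e j else 0)
      = (if i < j then e i else 0) + (if i < j then e j else 0) := by
    intro i j; split <;> simp
  simp_rw [step, Finset.sum_add_distrib]
  have swap : (∑ i : Fin K, ∑ j : Fin K, if i < j then e j else 0)
      = ∑ i : Fin K, ∑ j : Fin K, if j < i then e i else 0 := Finset.sum_comm
  rw [swap, ← Finset.sum_add_distrib]
  simp_rw [← Finset.sum_add_distrib]
  have combine : ∀ i j : Fin K, ((if i < j then e i else 0) + (if j < i then e i else 0))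
      = (if i = j then 0 else e i) := by
    intro i j
    rcases lt_trichotomy i j with hlt | heq | hgt
    · simp [hlt, hlt.ne, not_lt_of_gt hlt]
    · simp [heq, lt_irrefl]
    · simp [hgt, hgt.ne', not_lt_of_gt hgt]
  simp_rw [combine]
  have inner : ∀ i : Fin K, (∑ j : Fin K, if i = j then 0 else e i)
      = (K : ℝ) * e i - e i := by
    intro i
    have hsplit : ∀ j : Fin K, (if i = j then 0 else e i)
        = e i - (if i = j then e i else 0) := by
      intro j; split <;> simp
    simp_rw [hsplit, Finset.sum_sub_distrib, Finset.sum_ite_eq, Finset.sum_const,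
      Finset.card_univ, Fintype.card_fin, nsmul_eq_mul]
    simp
  simp_rw [inner]
  rw [Finset.sum_sub_distrib, ← Finset.mul_sum]
  ring

/-- Many-to-one, average error: `(K-1)` times the summed translation errors over the `K`
source languages is at least the sum over pairs `i < j` of the total variation distances
between the target marginals, minus `K(K-1)/2 · ε`. -/
theorem many_to_one_avg_lower_bound {X Y Z : Type*}
    [Countable X] [MeasurableSpace X] [DiscreteMeasurableSpace X]
    [Countable Y] [MeasurableSpace Y] [DiscreteMeasurableSpace Y]
    [MeasurableSpace Z]
    (K : ℕ) (hK : 2 ≤ K)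
    (D : Fin K → PMF X) (f : Fin K → X → Y) (g : X → Z) (ε : ℝ)
    (hg : ∀ i j, i ≠ j →
      tvDist ((D i).map g).toMeasure ((D j).map g).toMeasure ≤ ε)
    {h : Z → Y} (hh : Measurable h) :
    ((K : ℝ) - 1) * ∑ i : Fin K, ((D i).toMeasure {x | h (g x) ≠ f i x}).toReal
      ≥ (∑ p ∈ Finset.univ.filter (fun p : Fin K × Fin K => p.1 < p.2),
          tvDist ((D p.1).map (f p.1)).toMeasure ((D p.2).map (f p.2)).toMeasure)
        - ((K : ℝ) * ((K : ℝ) - 1) / 2) * ε := by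
  set e : Fin K → ℝ := fun i => ((D i).toMeasure {x | h (g x) ≠ f i x}).toReal with he
  set S := Finset.univ.filter (fun p : Fin K × Fin K => p.1 < p.2) with hS
  have hbound : ∀ p ∈ S, tvDist ((D p.1).map (f p.1)).toMeasure ((D p.2).map (f p.2)).toMeasure
      ≤ e p.1 + e p.2 + ε := by
    intro p hp
    have hlt : p.1 < p.2 := (Finset.mem_filter.mp hp).2
    refine le_trans (pair_bound (D p.1) (D p.2) (f p.1) (f p.2) g h hh) ?_
    exact add_le_add le_rfl (hg p.1 p.2 hlt.ne)
  have hsum := Finset.sum_le_sum hbound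
  have hsplit : ∑ p ∈ S, (e p.1 + e p.2 + ε)
      = ((K : ℝ) - 1) * ∑ i, e i + (S.card : ℝ) * ε := by
    rw [Finset.sum_add_distrib, sum_pairs, Finset.sum_const, nsmul_eq_mul]
  have hcard : (S.card : ℝ) = (K : ℝ) * ((K : ℝ) - 1) / 2 := by
    have h1 := sum_pairs K (fun _ => (1 : ℝ))
    simp only [Finset.sum_const, nsmul_eq_mul, mul_one, Finset.card_univ,
      Fintype.card_fin] at h1
    rw [hS]
    norm_num at h1
    linarith
  rw [ge_iff_le, sub_le_iff_le_add]
  calc (∑ p ∈ S, tvDist ((D p.1).map (f p.1)).toMeasure ((D p.2).map (f p.2)).toMeasure)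
      ≤ ∑ p ∈ S, (e p.1 + e p.2 + ε) := hsum
    _ = ((K : ℝ) - 1) * ∑ i, e i + (S.card : ℝ) * ε := hsplit
    _ = ((K : ℝ) - 1) * ∑ i, e i + (K : ℝ) * ((K : ℝ) - 1) / 2 * ε := by rw [hcard]
end

section
/- (Generalization bound for a single translation task.) Let E be a real normed vector space, let μ be a probability measure on E × E with ‖x'‖ ≤ M for μ-almost every (x, x'), and let F be a set of Borel measurable maps f : E → E with sup_x ‖f(x)‖ ≤ M for every f ∈ F. Fix ε > 0 and 0 < δ < 1, and suppose there is a finite (ε/(16M))-net T ⊆ F of F in sup norm with |T| = k. If n ≥ (32·M⁴/ε²)·log(2k/δ), then with μⁿ-outer probability at least 1 − δ over i.i.d. samples S ∼ μⁿ of size n, every f ∈ F satisfies ε(f) ≤ ε̂_S(f) + ε. -/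
open MeasureTheory

/-- The population translation loss of a map `f : E → E` under a distribution `μ` over
aligned pairs: `ε(f) = ∫ ‖f(x) - x'‖² dμ(x, x')`. -/
noncomputable def popLoss {E : Type*} [NormedAddCommGroup E] [MeasurableSpace E]
    (μ : Measure (E × E)) (f : E → E) : ℝ :=
  ∫ p, ‖f p.1 - p.2‖ ^ 2 ∂μ

/-- The empirical translation loss of a map `f : E → E` on a finite sample `S` of
aligned pairs: `ε̂_S(f) = (1/n) · Σᵢ ‖f(xᵢ) - x'ᵢ‖²`. -/
noncomputable def empLoss {E : Type*} [NormedAddCommGroup E] {n : ℕ}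
    (S : Fin n → E × E) (f : E → E) : ℝ :=
  (1 / (n : ℝ)) * ∑ i : Fin n, ‖f (S i).1 - (S i).2‖ ^ 2

open Real in
/-- The analytic core of Hoeffding's lemma. -/
lemma hoeffding_scalar {p : ℝ} (hp0 : 0 ≤ p) (hp1 : p ≤ 1) (h : ℝ) :
    Real.exp (-p*h) * (1 - p + p * Real.exp h) ≤ Real.exp (h^2/8) := by
  have hD : ∀ x : ℝ, 0 < 1 - p + p * Real.exp x := by
    intro x
    rcases eq_or_lt_of_le hp0 with h0 | h0
    · simp [← h0]
    · nlinarith [Real.exp_pos x, mul_pos h0 (Real.exp_pos x)]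
  set D : ℝ → ℝ := fun x => 1 - p + p * Real.exp x with hDdef
  set φ : ℝ → ℝ := fun x => x^2/8 + p*x - Real.log (D x) with hφdef
  set φ' : ℝ → ℝ := fun x => x/4 + p - p * Real.exp x / D x with hφ'def
  have hDderiv : ∀ x, HasDerivAt D (p * Real.exp x) x := by
    intro x
    exact ((Real.hasDerivAt_exp x).const_mul p).const_add (1 - p)
  have hφderiv : ∀ x, HasDerivAt φ (φ' x) x := by
    intro x
    have h1 : HasDerivAt (fun x : ℝ => x^2/8 + p*x) (x/4 + p) x := by
      have := ((hasDerivAt_pow 2 x).div_const 8).add ((hasDerivAt_id x).const_mul p)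
      refine this.congr_deriv ?_
      ring
    have h2 : HasDerivAt (fun x => Real.log (D x)) (p * Real.exp x / D x) x :=
      (hDderiv x).log (ne_of_gt (hD x))
    exact h1.sub h2
  have hφ'deriv : ∀ x, HasDerivAt φ' (1/4 - p * Real.exp x * (1 - p) / (D x)^2) x := by
    intro x
    have h1 : HasDerivAt (fun x => p * Real.exp x / D x)
        ((p * Real.exp x * D x - p * Real.exp x * (p * Real.exp x)) / (D x)^2) x :=
      ((Real.hasDerivAt_exp x).const_mul p).div (hDderiv x) (ne_of_gt (hD x))
    have h2 : HasDerivAt (fun x : ℝ => x/4 + p) (1/4) x := by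
      have := ((hasDerivAt_id x).div_const 4).add_const p
      simpa using this
    have := h2.sub h1
    refine this.congr_deriv ?_
    have : D x = 1 - p + p * Real.exp x := rfl
    field_simp [this]
    ring
  have hφ'' : ∀ x, 0 ≤ 1/4 - p * Real.exp x * (1 - p) / (D x)^2 := by
    intro x
    rw [sub_nonneg, div_le_iff₀ (by have := hD x; positivity)]
    have : D x = 1 - p + p * Real.exp x := rfl
    rw [this]
    nlinarith [sq_nonneg (1 - p - p * Real.exp x)]
  have hφ'mono : Monotone φ' := by
    apply monotone_of_deriv_nonneg
    · exact fun x => (hφ'deriv x).differentiableAt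
    · intro x
      rw [(hφ'deriv x).deriv]
      exact hφ'' x
  have hφ'0 : φ' 0 = 0 := by
    simp [hφ'def, hDdef]
  have hφ0 : φ 0 = 0 := by
    simp [hφdef, hDdef]
  have key : 0 ≤ φ h := by
    rcases le_total 0 h with hh | hh
    · have : MonotoneOn φ (Set.Ici 0) := by
        apply monotoneOn_of_deriv_nonneg (convex_Ici 0)
        · exact Continuous.continuousOn (by
            have : Differentiable ℝ φ := fun x => (hφderiv x).differentiableAt
            exact this.continuous)
        · exact fun x _ => (hφderiv x).differentiableAt.differentiableWithinAt
        · intro x hx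
          rw [(hφderiv x).deriv]
          rw [interior_Ici] at hx
          have := hφ'mono (le_of_lt hx)
          rw [hφ'0] at this
          exact this
      have := this (Set.self_mem_Ici) hh hh
      rwa [hφ0] at this
    · have : AntitoneOn φ (Set.Iic 0) := by
        apply antitoneOn_of_deriv_nonpos (convex_Iic 0)
        · exact Continuous.continuousOn (by
            have : Differentiable ℝ φ := fun x => (hφderiv x).differentiableAt
            exact this.continuous)
        · exact fun x _ => (hφderiv x).differentiableAt.differentiableWithinAt
        · intro x hx
          rw [(hφderiv x).deriv]
          rw [interior_Iic] at hx
          have := hφ'mono (le_of_lt hx)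
          rw [hφ'0] at this
          exact this
      have := this hh (Set.self_mem_Iic) hh
      rwa [hφ0] at this
  have hlog : Real.log (D h) ≤ h^2/8 + p*h := by
    have : φ h = h^2/8 + p*h - Real.log (D h) := rfl
    linarith [key, this ▸ key]
  calc Real.exp (-p*h) * (1 - p + p * Real.exp h) = Real.exp (-p*h + Real.log (D h)) := by
        rw [Real.exp_add, Real.exp_log (hD h)]
      _ ≤ Real.exp (h^2/8) := by
        apply Real.exp_le_exp.2
        linarith

open Real MeasureTheory in
/-- Hoeffding's lemma: mgf bound for a mean-zero bounded random variable. -/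
lemma hoeffding_mgf {Ω : Type*} [MeasurableSpace Ω] (ν : Measure Ω) [IsProbabilityMeasure ν]
    (X : Ω → ℝ) (hX : Measurable X) (a b : ℝ) (hab : ∀ x, X x ∈ Set.Icc a b)
    (hmean : ∫ x, X x ∂ν = 0) (l : ℝ) :
    ∫ x, Real.exp (l * X x) ∂ν ≤ Real.exp (l^2 * (b-a)^2/8) := by
  have hXint : Integrable X ν := by
    apply Integrable.mono' (integrable_const (max |a| |b|)) hX.aestronglyMeasurable
    filter_upwards with x
    rcases hab x with ⟨h1, h2⟩
    rw [Real.norm_eq_abs, abs_le]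
    constructor
    · exact le_trans (neg_le_neg (le_max_left |a| |b|)) (le_trans (neg_abs_le a) h1)
    · exact le_trans h2 (le_trans (le_abs_self b) (le_max_right |a| |b|))
  have ha : a ≤ 0 := by
    have : a * 1 ≤ 0 := by
      calc a * 1 = ∫ _ : Ω, a ∂ν := by simp
        _ ≤ ∫ x, X x ∂ν := integral_mono (integrable_const a) hXint (fun x => (hab x).1)
        _ = 0 := hmean
    linarith
  have hb : 0 ≤ b := by
    have : 0 ≤ b * 1 := by
      calc (0:ℝ) = ∫ x, X x ∂ν := hmean.symm
        _ ≤ ∫ _ : Ω, b ∂ν := integral_mono hXint (integrable_const b) (fun x => (hab x).2)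
        _ = b * 1 := by simp
    linarith
  rcases eq_or_lt_of_le (le_trans ha hb : a ≤ b) with heq | hlt
  · -- a = b = 0, X ≡ 0
    have ha0 : a = 0 := by linarith
    have hb0 : b = 0 := by linarith
    have hX0 : ∀ x, X x = 0 := by
      intro x
      rcases hab x with ⟨h1, h2⟩
      linarith
    simp only [hX0, mul_zero, Real.exp_zero, integral_const, measure_univ, probReal_univ, ENNReal.toReal_one,
      smul_eq_mul, one_mul]
    exact Real.one_le_exp (by positivity)
  · set p : ℝ := -a / (b - a) with hpdef
    have hba : 0 < b - a := by linarith
    have hp0 : 0 ≤ p := div_nonneg (by linarith) hba.le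
    have hp1 : p ≤ 1 := by
      rw [hpdef, div_le_one hba]; linarith
    -- pointwise convexity bound
    have hpt : ∀ x, Real.exp (l * X x) ≤
        (b - X x)/(b-a) * Real.exp (l*a) + (X x - a)/(b-a) * Real.exp (l*b) := by
      intro x
      rcases hab x with ⟨h1, h2⟩
      have hw1 : (0:ℝ) ≤ (b - X x)/(b-a) := div_nonneg (by linarith) hba.le
      have hw2 : (0:ℝ) ≤ (X x - a)/(b-a) := by
        apply div_nonneg _ (le_of_lt hba); linarith
      have hsum : (b - X x)/(b-a) + (X x - a)/(b-a) = 1 := by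
        field_simp
        ring
      have := convexOn_exp.2 (Set.mem_univ (l*a)) (Set.mem_univ (l*b)) hw1 hw2 hsum
      simp only [smul_eq_mul] at this
      refine le_trans (le_of_eq ?_) this
      congr 1
      field_simp
      ring
    -- integrate
    have hint : ∫ x, Real.exp (l * X x) ∂ν ≤
        b/(b-a) * Real.exp (l*a) + (-a)/(b-a) * Real.exp (l*b) := by
      have hrhs : Integrable (fun x => (b - X x)/(b-a) * Real.exp (l*a)
          + (X x - a)/(b-a) * Real.exp (l*b)) ν := by
        apply Integrable.add
        · exact ((((integrable_const b).sub hXint).div_const (b-a)).mul_const _)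
        · exact (((hXint.sub (integrable_const a)).div_const (b-a)).mul_const _)
      have hmono := integral_mono_of_nonneg (f := fun x => Real.exp (l * X x))
        (g := fun x => (b - X x)/(b-a) * Real.exp (l*a) + (X x - a)/(b-a) * Real.exp (l*b))
        (by filter_upwards with x; positivity) hrhs (by filter_upwards with x; exact hpt x)
      refine le_trans hmono (le_of_eq ?_)
      have hfe : (fun x => (b - X x)/(b-a) * Real.exp (l*a) + (X x - a)/(b-a) * Real.exp (l*b))
          = fun x => (b*Real.exp (l*a) - a*Real.exp (l*b))/(b-a)
            + X x * ((Real.exp (l*b) - Real.exp (l*a))/(b-a)) := by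
        funext x
        field_simp
        ring
      rw [hfe, integral_add (integrable_const _) (hXint.mul_const _), integral_const,
        integral_mul_const, hmean]
      simp
      field_simp
      ring
    refine le_trans hint ?_
    have key := hoeffding_scalar hp0 hp1 (l * (b-a))
    have h1 : b/(b-a) = 1 - p := by rw [hpdef]; field_simp; ring
    have hla : l * a = -p * (l * (b-a)) := by rw [hpdef]; field_simp
    have hlb : l * b = -p * (l * (b-a)) + l * (b-a) := by rw [hpdef]; field_simp; ring
    calc b/(b-a) * Real.exp (l*a) + (-a)/(b-a) * Real.exp (l*b)
        = Real.exp (-p*(l*(b-a))) * (1 - p + p * Real.exp (l*(b-a))) := by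
          rw [h1, hla, hlb, Real.exp_add, hpdef]
          ring
      _ ≤ Real.exp ((l*(b-a))^2/8) := key
      _ = Real.exp (l^2*(b-a)^2/8) := by congr 1; ring

open Real MeasureTheory in
/-- Chernoff lower-tail bound for the empirical mean of an i.i.d. sample of a
bounded measurable function, with everywhere-pointwise bounds. -/
lemma chernoff_pointwise {Ω : Type*} [MeasurableSpace Ω] (ν : Measure Ω)
    [IsProbabilityMeasure ν] (g : Ω → ℝ) (hg : Measurable g) (B : ℝ) (hB : 0 < B)
    (hg0 : ∀ x, 0 ≤ g x) (hgB : ∀ x, g x ≤ B) (n : ℕ) (s : ℝ) (hs : 0 < s) :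
    (Measure.pi fun _ : Fin n => ν)
      {S | s ≤ (∫ x, g x ∂ν) - (1/(n:ℝ)) * ∑ i : Fin n, g (S i)}
      ≤ ENNReal.ofReal (Real.exp (-2*(n:ℝ)*s^2/B^2)) := by
  haveI : IsProbabilityMeasure (Measure.pi fun _ : Fin n => ν) := Measure.pi.instIsProbabilityMeasure _
  rcases Nat.eq_zero_or_pos n with hn | hn
  · subst hn
    have h1 : ENNReal.ofReal (Real.exp (-2*((0:ℕ):ℝ)*s^2/B^2)) = 1 := by
      norm_num
    rw [h1]
    exact le_trans (measure_mono (Set.subset_univ _)) (by simp)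
  · have hgint : Integrable g ν := by
      apply Integrable.mono' (integrable_const B) hg.aestronglyMeasurable
      filter_upwards with x
      rw [Real.norm_eq_abs, abs_of_nonneg (hg0 x)]
      exact hgB x
    set m : ℝ := ∫ x, g x ∂ν with hm
    have hm0 : 0 ≤ m := integral_nonneg hg0
    have hmB : m ≤ B := by
      calc m ≤ ∫ _ : Ω, B ∂ν := integral_mono hgint (integrable_const B) hgB
        _ = B := by simp
    set l : ℝ := 4*s/B^2 with hl
    have hlpos : 0 < l := by positivity
    set X : Ω → ℝ := fun x => m - g x with hX
    have hXmeas : Measurable X := measurable_const.sub hg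
    have hmgf : ∫ x, Real.exp (l * X x) ∂ν ≤ Real.exp (l^2 * B^2/8) := by
      have := hoeffding_mgf ν X hXmeas (m - B) m
        (fun x => ⟨by simp only [hX]; linarith [hgB x], by simp only [hX]; linarith [hg0 x]⟩)
        (by rw [integral_sub (integrable_const m) hgint]; simp [hm]) l
      convert this using 3
      ring
    -- the event rewritten in exponential form
    have hev : {S : Fin n → Ω | s ≤ m - (1/(n:ℝ)) * ∑ i : Fin n, g (S i)}
        = {S : Fin n → Ω | Real.exp (l * ((n:ℝ)*s)) ≤ Real.exp (l * ∑ i : Fin n, X (S i))} := by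
      ext S
      simp only [Set.mem_setOf_eq, Real.exp_le_exp]
      have hsum : ∑ i : Fin n, X (S i) = (n:ℝ)*m - ∑ i : Fin n, g (S i) := by
        simp [hX, Finset.sum_sub_distrib, mul_comm]
      rw [hsum]
      have hn' : (0:ℝ) < (n:ℝ) := by exact_mod_cast hn
      have he : m - (1/(n:ℝ)) * ∑ i : Fin n, g (S i)
          = ((n:ℝ)*m - ∑ i : Fin n, g (S i))/(n:ℝ) := by
        field_simp
      rw [he, le_div_iff₀ hn', mul_le_mul_iff_right₀ hlpos, mul_comm s (n:ℝ)]
    rw [hev]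
    -- Markov's inequality
    have hYint : Integrable (fun S : Fin n → Ω => Real.exp (l * ∑ i : Fin n, X (S i)))
        (Measure.pi fun _ : Fin n => ν) := by
      apply Integrable.mono' (integrable_const (Real.exp (l * ((n:ℝ)*B))))
      · apply Measurable.aestronglyMeasurable
        apply Measurable.exp
        apply Measurable.const_mul
        exact Finset.measurable_sum _ (fun i _ => hXmeas.comp (measurable_pi_apply i))
      · filter_upwards with S
        rw [Real.norm_eq_abs, abs_of_nonneg (Real.exp_pos _).le, Real.exp_le_exp]
        apply mul_le_mul_of_nonneg_left _ hlpos.le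
        calc ∑ i : Fin n, X (S i) ≤ ∑ _i : Fin n, B := by
              apply Finset.sum_le_sum
              intro i _
              simp only [hX]
              linarith [hg0 (S i), hmB]
          _ = (n:ℝ)*B := by simp [mul_comm]
    have hmarkov := mul_meas_ge_le_integral_of_nonneg
      (μ := Measure.pi fun _ : Fin n => ν)
      (f := fun S : Fin n → Ω => Real.exp (l * ∑ i : Fin n, X (S i)))
      (by filter_upwards with S; positivity) hYint (Real.exp (l * ((n:ℝ)*s)))
    -- compute the integral via Fubini
    have hprod : ∫ S : Fin n → Ω, Real.exp (l * ∑ i : Fin n, X (S i))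
        ∂(Measure.pi fun _ : Fin n => ν) = (∫ x, Real.exp (l * X x) ∂ν)^n := by
      letI : MeasureSpace Ω := ⟨ν⟩
      haveI : SigmaFinite (volume : Measure Ω) := by
        have : IsProbabilityMeasure (volume : Measure Ω) := ‹IsProbabilityMeasure ν›
        infer_instance
      have h1 : ∀ S : Fin n → Ω, Real.exp (l * ∑ i : Fin n, X (S i))
          = ∏ i : Fin n, (fun x => Real.exp (l * X x)) (S i) := by
        intro S
        rw [Finset.mul_sum, Real.exp_sum]
      simp_rw [h1]
      have := MeasureTheory.integral_fintype_prod_eq_pow (𝕜 := ℝ) (ι := Fin n)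
        (fun x => Real.exp (l * X x)) (μ := ν)
      simpa using this
    rw [hprod] at hmarkov
    -- combine
    have hfin : (∫ x, Real.exp (l * X x) ∂ν)^n ≤ Real.exp (l^2*B^2/8)^n :=
      pow_le_pow_left₀ (integral_nonneg (fun x => (Real.exp_pos _).le)) hmgf n
    have htr : ((Measure.pi fun _ : Fin n => ν)
        {S : Fin n → Ω | Real.exp (l * ((n:ℝ)*s)) ≤ Real.exp (l * ∑ i : Fin n, X (S i))}).toReal
        ≤ Real.exp (-2*(n:ℝ)*s^2/B^2) := by
      have hepos : (0:ℝ) < Real.exp (l * ((n:ℝ)*s)) := Real.exp_pos _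
      rw [← le_div_iff₀' hepos] at hmarkov
      calc ((Measure.pi fun _ : Fin n => ν)
            {S : Fin n → Ω | Real.exp (l * ((n:ℝ)*s))
              ≤ Real.exp (l * ∑ i : Fin n, X (S i))}).toReal
          ≤ (∫ x, Real.exp (l * X x) ∂ν)^n / Real.exp (l * ((n:ℝ)*s)) := hmarkov
        _ ≤ Real.exp (l^2*B^2/8)^n / Real.exp (l * ((n:ℝ)*s)) := by gcongr
        _ = Real.exp ((n:ℝ)*(l^2*B^2/8) - l * ((n:ℝ)*s)) := by
            rw [← Real.exp_nat_mul, ← Real.exp_sub]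
        _ = Real.exp (-2*(n:ℝ)*s^2/B^2) := by
            congr 1
            rw [hl]
            field_simp
            ring
    rw [← ENNReal.ofReal_toReal (measure_ne_top _ _)]
    exact ENNReal.ofReal_le_ofReal htr

open Real MeasureTheory in
/-- Chernoff lower-tail bound, a.e. version. -/
lemma chernoff_ae {Ω : Type*} [MeasurableSpace Ω] (ν : Measure Ω)
    [IsProbabilityMeasure ν] (g : Ω → ℝ) (hgi : Integrable g ν) (B : ℝ) (hB : 0 < B)
    (hg0 : ∀ x, 0 ≤ g x) (hgB : ∀ᵐ x ∂ν, g x ≤ B) (n : ℕ) (s : ℝ) (hs : 0 < s) :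
    (Measure.pi fun _ : Fin n => ν)
      {S | s ≤ (∫ x, g x ∂ν) - (1/(n:ℝ)) * ∑ i : Fin n, g (S i)}
      ≤ ENNReal.ofReal (Real.exp (-2*(n:ℝ)*s^2/B^2)) := by
  obtain ⟨g₁, hg₁sm, hae⟩ := hgi.1
  set g₀ : Ω → ℝ := fun x => max 0 (min (g₁ x) B) with hg₀
  have hg₀meas : Measurable g₀ := measurable_const.max (hg₁sm.measurable.min measurable_const)
  have hg₀0 : ∀ x, 0 ≤ g₀ x := fun x => le_max_left _ _
  have hg₀B : ∀ x, g₀ x ≤ B := fun x => max_le hB.le (min_le_right _ _)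
  have haeg : g =ᵐ[ν] g₀ := by
    filter_upwards [hae, hgB] with x h1 h2
    simp only [hg₀]
    rw [← h1, min_eq_left h2, max_eq_right (hg0 x)]
  have hint : ∫ x, g x ∂ν = ∫ x, g₀ x ∂ν := integral_congr_ae haeg
  set W : Set (Fin n → Ω) :=
    ⋃ i : Fin n, (Function.eval i) ⁻¹' (toMeasurable ν {x | g x ≠ g₀ x}) with hW
  have hWnull : (Measure.pi fun _ : Fin n => ν) W = 0 := by
    apply measure_iUnion_null
    intro i
    apply Measure.pi_eval_preimage_null
    rw [measure_toMeasurable]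
    exact ae_iff.1 haeg
  have hsub : {S : Fin n → Ω | s ≤ (∫ x, g x ∂ν) - (1/(n:ℝ)) * ∑ i : Fin n, g (S i)}
      ⊆ {S : Fin n → Ω | s ≤ (∫ x, g₀ x ∂ν) - (1/(n:ℝ)) * ∑ i : Fin n, g₀ (S i)} ∪ W := by
    intro S hS
    by_cases hSW : S ∈ W
    · exact Or.inr hSW
    · left
      have heq : ∀ i : Fin n, g (S i) = g₀ (S i) := by
        intro i
        by_contra hne
        exact hSW (Set.mem_iUnion.2 ⟨i, subset_toMeasurable _ _ hne⟩)
      simp only [Set.mem_setOf_eq] at hS ⊢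
      rw [← hint]
      have : ∑ i : Fin n, g₀ (S i) = ∑ i : Fin n, g (S i) :=
        Finset.sum_congr rfl (fun i _ => (heq i).symm)
      rw [this]
      exact hS
  calc (Measure.pi fun _ : Fin n => ν)
        {S | s ≤ (∫ x, g x ∂ν) - (1/(n:ℝ)) * ∑ i : Fin n, g (S i)}
      ≤ (Measure.pi fun _ : Fin n => ν)
        ({S | s ≤ (∫ x, g₀ x ∂ν) - (1/(n:ℝ)) * ∑ i : Fin n, g₀ (S i)} ∪ W) :=
        measure_mono hsub
    _ ≤ (Measure.pi fun _ : Fin n => ν)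
        {S | s ≤ (∫ x, g₀ x ∂ν) - (1/(n:ℝ)) * ∑ i : Fin n, g₀ (S i)}
        + (Measure.pi fun _ : Fin n => ν) W := measure_union_le _ _
    _ ≤ ENNReal.ofReal (Real.exp (-2*(n:ℝ)*s^2/B^2)) + 0 := by
        rw [hWnull]
        gcongr
        exact chernoff_pointwise ν g₀ hg₀meas B hB hg₀0 hg₀B n s hs
    _ = ENNReal.ofReal (Real.exp (-2*(n:ℝ)*s^2/B^2)) := by rw [add_zero]

set_option maxHeartbeats 1000000 in
/-- Generalization bound for a single translation task: if `T ⊆ F` is a finite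
`(ε/(16M))`-net of `F` in sup norm of cardinality `k` and
`n ≥ (32·M⁴/ε²)·log(2k/δ)`, then with `μⁿ`-(outer) probability at least `1 - δ`
(i.e., the bad event has measure at most `δ`), every `f ∈ F` satisfies
`ε(f) ≤ ε̂_S(f) + ε`. -/
theorem generalization_single_task {E : Type*} [NormedAddCommGroup E] [NormedSpace ℝ E]
    [MeasurableSpace E] [BorelSpace E]
    (μ : Measure (E × E)) [IsProbabilityMeasure μ] (M : ℝ) (hM : 0 < M)
    (hμ : ∀ᵐ p ∂μ, ‖p.2‖ ≤ M)
    (F : Set (E → E)) (hFmeas : ∀ f ∈ F, Measurable f)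
    (hFbd : ∀ f ∈ F, ∀ x, ‖f x‖ ≤ M)
    (ε : ℝ) (hε : 0 < ε) (δ : ℝ) (hδ₀ : 0 < δ) (hδ₁ : δ < 1)
    (T : Finset (E → E)) (hTF : ↑T ⊆ F) (k : ℕ) (hk : T.card = k)
    (hnet : ∀ f ∈ F, ∃ t ∈ T, (⨆ x : E, ‖f x - t x‖) ≤ ε / (16 * M))
    (n : ℕ) (hn : (32 * M ^ 4 / ε ^ 2) * Real.log (2 * (k : ℝ) / δ) ≤ (n : ℝ)) :
    (Measure.pi fun _ : Fin n => μ)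
        {S : Fin n → E × E | ¬ ∀ f ∈ F, popLoss μ f ≤ empLoss S f + ε}
      ≤ ENNReal.ofReal δ := by
  rcases Set.eq_empty_or_nonempty F with hF | hF
  · subst hF
    have : {S : Fin n → E × E | ¬ ∀ f ∈ (∅ : Set (E → E)), popLoss μ f ≤ empLoss S f + ε}
        = ∅ := by
      ext S; simp
    rw [this]
    simp only [measure_empty]
    exact bot_le
  -- k ≥ 1
  obtain ⟨f₀, hf₀⟩ := hF
  obtain ⟨t₀, ht₀, -⟩ := hnet f₀ hf₀
  have hkpos : 0 < k := hk ▸ Finset.card_pos.2 ⟨t₀, ht₀⟩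
  have hkR : (0:ℝ) < (k:ℝ) := by exact_mod_cast hkpos
  set B : ℝ := 4 * M^2 with hB
  have hBpos : 0 < B := by positivity
  -- net assignment with pointwise distance bound
  choose! η hη₁ hη₂ using hnet
  have hηF : ∀ f ∈ F, η f ∈ F := fun f hf => hTF (hη₁ f hf)
  have hdist : ∀ f ∈ F, ∀ x, ‖f x - η f x‖ ≤ ε / (16 * M) := by
    intro f hf x
    refine le_trans ?_ (hη₂ f hf)
    apply le_ciSup ?_ x
    refine ⟨M + M, ?_⟩
    rintro y ⟨z, rfl⟩
    calc ‖f z - η f z‖ ≤ ‖f z‖ + ‖η f z‖ := norm_sub_le _ _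
      _ ≤ M + M := add_le_add (hFbd f hf z) (hFbd (η f) (hηF f hf) z)
  -- deviation threshold
  obtain ⟨γ, hγpos, hγle, hγ2⟩ : ∃ γ : ℝ, 0 < γ ∧ γ ≤ ε/4 ∧
      2*(n:ℝ)*ε*γ ≤ 16 * M^4 * Real.log 2 := by
    refine ⟨min (ε/4) (16 * M^4 * Real.log 2 / (2*(n:ℝ)*ε + 1)), ?_, min_le_left _ _, ?_⟩
    · apply lt_min (by positivity)
      have h2 : (0:ℝ) < Real.log 2 := Real.log_pos one_lt_two
      positivity
    · have h1 : min (ε/4) (16 * M^4 * Real.log 2 / (2*(n:ℝ)*ε + 1))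
          ≤ 16 * M^4 * Real.log 2 / (2*(n:ℝ)*ε + 1) := min_le_right _ _
      have h2 : (0:ℝ) < 2*(n:ℝ)*ε + 1 := by positivity
      rw [le_div_iff₀ h2] at h1
      have h2l : (0:ℝ) < Real.log 2 := Real.log_pos one_lt_two
      have h3 : (0:ℝ) ≤ 2*(n:ℝ)*ε := by positivity
      nlinarith [lt_min (show (0:ℝ) < ε/4 by positivity)
        (show (0:ℝ) < 16 * M^4 * Real.log 2 / (2*(n:ℝ)*ε + 1) by positivity)]
  obtain ⟨s, hsdef⟩ : ∃ s : ℝ, s = ε/2 - γ := ⟨_, rfl⟩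
  have hspos : 0 < s := by rw [hsdef]; linarith
  -- the numeric bound
  have hexp : Real.exp (-2*(n:ℝ)*s^2/B^2) ≤ δ/(k:ℝ) := by
    have hlog : Real.log (2 * (k:ℝ) / δ) = Real.log 2 + (Real.log k - Real.log δ) := by
      rw [Real.log_div (by positivity) (ne_of_gt hδ₀), Real.log_mul (by norm_num) (ne_of_gt hkR)]
      ring
    have hL2 : 0 ≤ Real.log k - Real.log δ := by
      have h1 : (0:ℝ) ≤ Real.log k := Real.log_nonneg (by exact_mod_cast hkpos)
      have h2 : Real.log δ ≤ 0 := Real.log_nonpos hδ₀.le hδ₁.le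
      linarith
    -- from hn : 32 M⁴ L ≤ n ε²
    have hn' : 32 * M^4 * Real.log (2*(k:ℝ)/δ) ≤ (n:ℝ) * ε^2 := by
      rw [div_mul_eq_mul_div, div_le_iff₀ (by positivity : (0:ℝ) < ε^2)] at hn
      linarith [hn]
    -- 16 M⁴ (log k - log δ) ≤ 2 n s²
    have hkey : 16 * M^4 * (Real.log k - Real.log δ) ≤ 2*(n:ℝ)*s^2 := by
      have hsq : s^2 ≥ ε^2/4 - ε*γ := by
        rw [hsdef]
        nlinarith [sq_nonneg γ]
      have h1 : 2*(n:ℝ)*s^2 ≥ 2*(n:ℝ)*(ε^2/4 - ε*γ) := by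
        apply mul_le_mul_of_nonneg_left hsq (by positivity)
      have h2 : 2*(n:ℝ)*(ε^2/4 - ε*γ) = (n:ℝ)*ε^2/2 - 2*(n:ℝ)*ε*γ := by ring
      rw [hlog] at hn'
      nlinarith
    rw [show δ/(k:ℝ) = Real.exp (Real.log (δ/(k:ℝ))) from
      (Real.exp_log (by positivity)).symm, Real.exp_le_exp,
      Real.log_div (ne_of_gt hδ₀) (ne_of_gt hkR)]
    rw [div_le_iff₀ (by positivity : (0:ℝ) < B^2), hB]
    nlinarith [hkey]
  -- a.e. bound on losses
  have hPae : ∀ g : E → E, (∀ x, ‖g x‖ ≤ M) → ∀ᵐ p ∂μ, ‖g p.1 - p.2‖^2 ≤ B := by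
    intro g hg
    filter_upwards [hμ] with p hp
    have h1 : ‖g p.1 - p.2‖ ≤ 2*M := by
      calc ‖g p.1 - p.2‖ ≤ ‖g p.1‖ + ‖p.2‖ := norm_sub_le _ _
        _ ≤ 2*M := by linarith [hg p.1]
    rw [hB]
    nlinarith [norm_nonneg (g p.1 - p.2)]
  have hPop_le : ∀ g : E → E, (∀ x, ‖g x‖ ≤ M) →
      Integrable (fun p : E × E => ‖g p.1 - p.2‖^2) μ → popLoss μ g ≤ B := by
    intro g hg hint
    rw [show popLoss μ g = ∫ p : E × E, ‖g p.1 - p.2‖^2 ∂μ from rfl]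
    refine le_trans (integral_mono_ae hint (integrable_const B) (hPae g hg)) ?_
    simp
  -- representative choice for each net point
  have hrep : ∀ t : E → E, ∃ g : E → E,
      Integrable (fun p : E × E => ‖g p.1 - p.2‖^2) μ ∧
      (∀ᵐ p ∂μ, ‖g p.1 - p.2‖^2 ≤ B) ∧ (∀ x, ‖g x‖ ≤ M) ∧
      ∀ f ∈ F, η f = t → Integrable (fun p : E × E => ‖f p.1 - p.2‖^2) μ →
        popLoss μ f ≤ popLoss μ g + γ ∧ ∀ x, ‖f x - g x‖ ≤ ε/(8*M) := by
    intro t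
    by_cases hne : ∃ f, (f ∈ F ∧ η f = t ∧ Integrable (fun p : E × E => ‖f p.1 - p.2‖^2) μ)
    · set A : Set (E → E) :=
        {f | f ∈ F ∧ η f = t ∧ Integrable (fun p : E × E => ‖f p.1 - p.2‖^2) μ} with hA
      set V : Set ℝ := popLoss μ '' A with hV
      have hVne : V.Nonempty := by
        obtain ⟨f, hf⟩ := hne
        exact ⟨popLoss μ f, ⟨f, hf, rfl⟩⟩
      have hVbdd : BddAbove V := by
        refine ⟨B, ?_⟩
        rintro v ⟨f, ⟨hf1, hf2, hf3⟩, rfl⟩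
        exact hPop_le f (hFbd f hf1) hf3
      obtain ⟨v, ⟨g₀, ⟨hg₀F, hg₀t, hg₀int⟩, rfl⟩, hvgt⟩ :=
        exists_lt_of_lt_csSup hVne (show sSup V - γ < sSup V by linarith)
      refine ⟨g₀, hg₀int, hPae g₀ (hFbd g₀ hg₀F), hFbd g₀ hg₀F, ?_⟩
      intro f hf hft hint
      constructor
      · have h1 : popLoss μ f ≤ sSup V := le_csSup hVbdd ⟨f, ⟨hf, hft, hint⟩, rfl⟩
        linarith
      · intro x
        have h1 : ‖f x - g₀ x‖ ≤ ‖f x - t x‖ + ‖t x - g₀ x‖ := norm_sub_le_norm_sub_add_norm_sub _ _ _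
        have h2 : ‖f x - t x‖ ≤ ε/(16*M) := by
          have := hdist f hf x; rwa [hft] at this
        have h3 : ‖t x - g₀ x‖ ≤ ε/(16*M) := by
          have := hdist g₀ hg₀F x; rw [hg₀t] at this
          rwa [norm_sub_rev]
        have h4 : ε/(16*M) + ε/(16*M) = ε/(8*M) := by
          field_simp
          ring
        linarith
    · refine ⟨fun _ => (0:E), ?_, ?_, ?_, ?_⟩
      · apply Integrable.mono' (integrable_const B)
        · apply Measurable.aestronglyMeasurable
          have : (fun p : E × E => ‖(0:E) - p.2‖^2) = fun p : E × E => ‖p.2‖^2 := by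
            funext p; rw [zero_sub, norm_neg]
          rw [this]
          exact (measurable_snd.norm).pow_const 2
        · filter_upwards [hμ] with p hp
          rw [Real.norm_eq_abs, abs_of_nonneg (by positivity), zero_sub, norm_neg, hB]
          nlinarith [norm_nonneg p.2]
      · filter_upwards [hμ] with p hp
        rw [zero_sub, norm_neg, hB]
        nlinarith [norm_nonneg p.2]
      · intro x; simp [norm_zero, hM.le]
      · intro f hf hft hint
        exact absurd ⟨f, hf, hft, hint⟩ hne
  choose rep hrep1 hrep2 hrep3 hrep4 using hrep
  -- the bad-sample events
  set N : Set (Fin n → E × E) := ⋃ i : Fin n, (Function.eval i) ⁻¹' {p : E × E | ¬ ‖p.2‖ ≤ M}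
    with hN
  have hNnull : (Measure.pi fun _ : Fin n => μ) N = 0 := by
    apply measure_iUnion_null
    intro i
    exact Measure.pi_eval_preimage_null (μ := fun _ : Fin n => μ) (ae_iff.1 hμ)
  set D : (E → E) → Set (Fin n → E × E) := fun t =>
    {S | s ≤ (∫ p : E × E, ‖rep t p.1 - p.2‖^2 ∂μ)
        - (1/(n:ℝ)) * ∑ i : Fin n, ‖rep t (S i).1 - (S i).2‖^2} with hD
  have hDbound : ∀ t : E → E,
      (Measure.pi fun _ : Fin n => μ) (D t) ≤ ENNReal.ofReal (δ/(k:ℝ)) := by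
    intro t
    refine le_trans (chernoff_ae μ (fun p : E × E => ‖rep t p.1 - p.2‖^2) (hrep1 t) B hBpos
      (fun p => by positivity) (hrep2 t) n s hspos) (ENNReal.ofReal_le_ofReal hexp)
  -- the pairwise comparison bound
  have hpair : ∀ (f g : E → E) (p : E × E), ‖p.2‖ ≤ M → (∀ x, ‖f x‖ ≤ M) →
      (∀ x, ‖g x‖ ≤ M) → (∀ x, ‖f x - g x‖ ≤ ε/(8*M)) →
      ‖g p.1 - p.2‖^2 ≤ ‖f p.1 - p.2‖^2 + ε/2 := by
    intro f g p hp hfb hgb hfg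
    have ha : ‖f p.1 - p.2‖ ≤ 2*M := by
      calc ‖f p.1 - p.2‖ ≤ ‖f p.1‖ + ‖p.2‖ := norm_sub_le _ _
        _ ≤ 2*M := by linarith [hfb p.1]
    have hb : ‖g p.1 - p.2‖ ≤ 2*M := by
      calc ‖g p.1 - p.2‖ ≤ ‖g p.1‖ + ‖p.2‖ := norm_sub_le _ _
        _ ≤ 2*M := by linarith [hgb p.1]
    have hdiff : ‖g p.1 - p.2‖ - ‖f p.1 - p.2‖ ≤ ε/(8*M) := by
      have h1 : ‖g p.1 - p.2‖ - ‖f p.1 - p.2‖ ≤ ‖(g p.1 - p.2) - (f p.1 - p.2)‖ :=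
        le_trans (le_abs_self _) (abs_norm_sub_norm_le _ _)
      have h2 : (g p.1 - p.2) - (f p.1 - p.2) = g p.1 - f p.1 := by abel
      rw [h2] at h1
      refine le_trans h1 ?_
      rw [norm_sub_rev]
      exact hfg p.1
    have h8 : ε/(8*M)*(8*M) = ε := div_mul_cancel₀ _ (by positivity)
    nlinarith [norm_nonneg (g p.1 - p.2), norm_nonneg (f p.1 - p.2),
      mul_le_mul_of_nonneg_right hdiff (by positivity : (0:ℝ) ≤ 8*M)]
  -- the inclusion
  have hincl : {S : Fin n → E × E | ¬ ∀ f ∈ F, popLoss μ f ≤ empLoss S f + ε}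
      ⊆ N ∪ ⋃ t ∈ T, D t := by
    intro S hS
    simp only [Set.mem_setOf_eq] at hS
    push_neg at hS
    obtain ⟨f, hf, hlt⟩ := hS
    by_cases hSN : S ∈ N
    · exact Or.inl hSN
    right
    have hgood : ∀ i : Fin n, ‖(S i).2‖ ≤ M := by
      intro i
      by_contra hcon
      exact hSN (Set.mem_iUnion.2 ⟨i, hcon⟩)
    -- badness forces integrability
    have hemp0 : 0 ≤ empLoss S f := by
      apply mul_nonneg (by positivity)
      apply Finset.sum_nonneg
      intro i _
      positivity
    have hpos : 0 < popLoss μ f := by linarith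
    have hAESM : AEStronglyMeasurable (fun p : E × E => ‖f p.1 - p.2‖^2) μ := by
      by_contra hcon
      rw [popLoss, integral_non_aestronglyMeasurable hcon] at hpos
      exact lt_irrefl 0 hpos
    have hint : Integrable (fun p : E × E => ‖f p.1 - p.2‖^2) μ := by
      apply Integrable.mono' (integrable_const B) hAESM
      filter_upwards [hPae f (hFbd f hf)] with p hp
      rwa [Real.norm_eq_abs, abs_of_nonneg (by positivity)]
    obtain ⟨hpopcmp, hdcmp⟩ := hrep4 (η f) f hf rfl hint
    -- empirical comparison
    have hempcmp : empLoss S (rep (η f)) ≤ empLoss S f + ε/2 := by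
      have hsum : ∑ i : Fin n, ‖rep (η f) (S i).1 - (S i).2‖^2
          ≤ ∑ i : Fin n, (‖f (S i).1 - (S i).2‖^2 + ε/2) := by
        apply Finset.sum_le_sum
        intro i _
        exact hpair f (rep (η f)) (S i) (hgood i) (hFbd f hf) (hrep3 (η f)) hdcmp
      have h1n : (0:ℝ) ≤ 1/(n:ℝ) := by positivity
      have h2 : (1/(n:ℝ)) * ((n:ℝ) * (ε/2)) ≤ ε/2 := by
        rcases Nat.eq_zero_or_pos n with h | h
        · subst h; simp; positivity
        · have : (0:ℝ) < (n:ℝ) := by exact_mod_cast h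
          rw [← mul_assoc, one_div, inv_mul_cancel₀ (ne_of_gt this), one_mul]
      calc empLoss S (rep (η f))
          ≤ (1/(n:ℝ)) * ∑ i : Fin n, (‖f (S i).1 - (S i).2‖^2 + ε/2) := by
            rw [empLoss]
            exact mul_le_mul_of_nonneg_left hsum h1n
        _ = empLoss S f + (1/(n:ℝ)) * ((n:ℝ) * (ε/2)) := by
            rw [empLoss, Finset.sum_add_distrib, Finset.sum_const, mul_add]
            simp [nsmul_eq_mul]
        _ ≤ empLoss S f + ε/2 := by linarith
    -- conclude membership in D (η f)
    have hmem : S ∈ D (η f) := by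
      simp only [hD, Set.mem_setOf_eq]
      have hpopeq : popLoss μ (rep (η f)) = ∫ p : E × E, ‖rep (η f) p.1 - p.2‖^2 ∂μ := rfl
      have hempeq : empLoss S (rep (η f))
          = (1/(n:ℝ)) * ∑ i : Fin n, ‖rep (η f) (S i).1 - (S i).2‖^2 := rfl
      rw [← hpopeq, ← hempeq]
      have : empLoss S f + ε < popLoss μ (rep (η f)) + γ := by linarith
      rw [hsdef]
      linarith
    exact Set.mem_biUnion (hη₁ f hf) hmem
  -- finish with the union bound
  calc (Measure.pi fun _ : Fin n => μ)
        {S : Fin n → E × E | ¬ ∀ f ∈ F, popLoss μ f ≤ empLoss S f + ε}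
      ≤ (Measure.pi fun _ : Fin n => μ) (N ∪ ⋃ t ∈ T, D t) := measure_mono hincl
    _ ≤ (Measure.pi fun _ : Fin n => μ) N
        + (Measure.pi fun _ : Fin n => μ) (⋃ t ∈ T, D t) := measure_union_le _ _
    _ ≤ 0 + ∑ t ∈ T, (Measure.pi fun _ : Fin n => μ) (D t) := by
        rw [hNnull]
        gcongr
        exact measure_biUnion_finset_le _ _
    _ ≤ ∑ _t ∈ T, ENNReal.ofReal (δ/(k:ℝ)) := by
        rw [zero_add]
        exact Finset.sum_le_sum (fun t _ => hDbound t)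
    _ = (k : ENNReal) * ENNReal.ofReal (δ/(k:ℝ)) := by
        rw [Finset.sum_const, hk, nsmul_eq_mul]
    _ = ENNReal.ofReal δ := by
        rw [← ENNReal.ofReal_natCast, ← ENNReal.ofReal_mul (by positivity)]
        congr 1
        field_simp
end
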